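/- Let T be the infinite binary tree with nonnegative weight w, and let Υ ⊂ T be a finite subtree. Define the flush-projection P_Υ : ℓ₁(T) → ℓ₁(Υ) by (P_Υ μ)(t) = μ(t) + Σ_{u∈Z(t)} μ(u), where for s ∉ Υ, z(s) is the last node of Υ on the branch from the root to s and Z(t) = z^{-1}(t); define V*_Υ : ℓ₁(Υ) → ℓ₂(Υ,W) by (V*_Υ ν)(t) = Σ_{u∈O(t)∩Υ} ν(u), and the embedding ι_Υ : ℓ₂(Υ,W) → ℓ₂(T,W) by extension by zero. Set A_Υ = ι_Υ V*_Υ P_Υ. Then for every μ ∈ ℓ₁(T): (i) (V*μ)(t) = (A_Υ μ)(t) for all t ∈ Υ, and (ii) ‖(V* − A_Υ)μ‖²_{2,W} = Σ_{t∉Υ} s_μ(t)² w(t), where (V*μ)(t) = s_μ(t) = Σ_{u⪰t} μ(u). -/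

import Mathlib

open scoped ENNReal

/-- A node of the infinite binary tree `T` is a finite binary string;
its level `|t|` is its length. -/
abbrev Node : Type := List Bool

/-- `μ` belongs to `ℓ₁(T)`, i.e. `Σ_t |μ(t)| < ∞`. -/
def MemL1 (μ : Node → ℝ) : Prop := Summable fun t : Node => |μ t|

/-- The `ℓ₁(T)` norm `‖μ‖₁ = Σ_t |μ(t)|`. -/
noncomputable def l1Norm (μ : Node → ℝ) : ℝ := ∑' t : Node, |μ t|

/-- `(V*μ)(t) = Σ_{u ⪰ t} μ(u)`, the sum over all nodes `u` having `t` as a prefix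
(including `u = t`). -/
noncomputable def Vstar (μ : Node → ℝ) (t : Node) : ℝ := ∑' u : {u : Node // t <+: u}, μ u.1

/-- The weight `w(t) = (1 + |t|)^{-β}`. -/
noncomputable def wgt (β : ℝ) (t : Node) : ℝ := ((1 : ℝ) + (t.length : ℝ)) ^ (-β)

/-- The squared distance of `f, g` in the weighted space `ℓ₂(T,W)`,
`Σ_t w(t) (f(t) - g(t))²`, computed in `ℝ≥0∞`. -/
noncomputable def distSqW (β : ℝ) (f g : Node → ℝ) : ℝ≥0∞ :=
  ∑' t : Node, ENNReal.ofReal (wgt β t * (f t - g t) ^ 2)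

/-- `lastIn Υ t s` says that `t` is the last node of `Υ` on the branch from the
root to `s`: `t ∈ Υ`, `t` is a prefix of `s`, and every prefix of `s` lying in `Υ`
is a prefix of `t`. -/
def lastIn (Υ : Set Node) (t s : Node) : Prop :=
  t ∈ Υ ∧ t <+: s ∧ ∀ u : Node, u ∈ Υ → u <+: s → u <+: t

/-- The flush-projection `P_Υ : ℓ₁(T) → ℓ₁(Υ)`:
`(P_Υ μ)(t) = μ(t) + Σ_{s ∈ Z(t)} μ(s)`, where `Z(t) = z⁻¹(t)` consists of those
`s ∉ Υ` whose last `Υ`-ancestor `z(s)` equals `t`. -/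
noncomputable def flushProj (Υ : Set Node) (μ : Node → ℝ) (t : Node) : ℝ :=
  μ t + ∑' s : {s : Node // s ∉ Υ ∧ lastIn Υ t s}, μ s.1

/-- The restricted summation operator `V*_Υ : ℓ₁(Υ) → ℓ₂(Υ,W)`:
`(V*_Υ ν)(t) = Σ_{u ∈ O(t) ∩ Υ} ν(u)`. -/
noncomputable def VstarSub (Υ : Set Node) (ν : Node → ℝ) (t : Node) : ℝ :=
  ∑' u : {u : Node // t <+: u ∧ u ∈ Υ}, ν u.1

/-- The approximating operator `A_Υ = ι_Υ V*_Υ P_Υ : ℓ₁(T) → ℓ₂(T,W)`, where `ι_Υ`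
is the extension by zero. -/
noncomputable def approxOp (Υ : Set Node) (μ : Node → ℝ) (t : Node) : ℝ :=
  Set.indicator Υ (VstarSub Υ (flushProj Υ μ)) t

open Classical in
noncomputable def zfun (Υ : Set Node) (s : Node) : Node :=
  s.take (Nat.findGreatest (fun k => s.take k ∈ Υ) s.length)

open Classical in
lemma zfun_lastIn (Υ : Set Node) (hroot : ([] : Node) ∈ Υ) (s : Node) :
    lastIn Υ (zfun Υ s) s := by
  refine ⟨?_, List.take_prefix _ _, ?_⟩
  · unfold zfun
    exact Nat.findGreatest_spec (P := fun k => s.take k ∈ Υ) (m := 0) (Nat.zero_le _)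
      (by simpa using hroot)
  · intro u hu hus
    have hlen : u.length ≤ s.length := hus.length_le
    have htake : s.take u.length = u := (List.prefix_iff_eq_take.mp hus).symm
    have hle : u.length ≤ Nat.findGreatest (fun k => s.take k ∈ Υ) s.length :=
      Nat.le_findGreatest (P := fun k => s.take k ∈ Υ) hlen (by simpa [htake] using hu)
    rw [List.prefix_iff_eq_take.mp hus]
    unfold zfun
    rw [List.take_isPrefix_take]
    exact Or.inl hle

lemma lastIn_unique {Υ : Set Node} {u v s : Node} (h1 : lastIn Υ u s) (h2 : lastIn Υ v s) :
    u = v := by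
  have p1 : u <+: v := h2.2.2 u h1.1 h1.2.1
  have p2 : v <+: u := h1.2.2 v h2.1 h2.2.1
  exact p1.eq_of_length (le_antisymm p1.length_le p2.length_le)

set_option maxHeartbeats 1000000 in
/-- For a finite subtree `Υ` and `μ ∈ ℓ₁(T)`:
(i) `(V*μ)(t) = (A_Υ μ)(t)` for every `t ∈ Υ`, and
(ii) `‖(V* - A_Υ)μ‖²_{2,W} = Σ_{t ∉ Υ} s_μ(t)² w(t)`. -/
theorem approx_operator_properties (w : Node → ℝ) (hw : ∀ t : Node, 0 ≤ w t)
    (Υ : Set Node) (hfin : Υ.Finite) (hroot : ([] : Node) ∈ Υ)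
    (hsub : ∀ t u : Node, t <+: u → u ∈ Υ → t ∈ Υ)
    (μ : Node → ℝ) (hμ : MemL1 μ) :
    (∀ t ∈ Υ, Vstar μ t = approxOp Υ μ t) ∧
      (∑' t : Node, ENNReal.ofReal (w t * (Vstar μ t - approxOp Υ μ t) ^ 2)) =
        ∑' t : {t : Node // t ∉ Υ}, ENNReal.ofReal (w t.1 * Vstar μ t.1 ^ 2) := by
  have hμ' : Summable μ := hμ.of_abs
  have key : ∀ t ∈ Υ, Vstar μ t = approxOp Υ μ t := by
    intro t ht
    have SA : Summable (fun u : {u : Node // t <+: u ∧ u ∈ Υ} => μ u.1) :=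
      hμ'.subtype {u : Node | t <+: u ∧ u ∈ Υ}
    have SB : Summable (fun s : {s : Node // t <+: s ∧ s ∉ Υ} => μ s.1) :=
      hμ'.subtype {s : Node | t <+: s ∧ s ∉ Υ}
    -- the bijection between pairs (u, s ∈ Z(u)) and descendants of t outside Υ
    let Φ : (Σ u : {u : Node // t <+: u ∧ u ∈ Υ}, {s : Node // s ∉ Υ ∧ lastIn Υ u.1 s}) →
        {s : Node // t <+: s ∧ s ∉ Υ} :=
      fun p => ⟨p.2.1, p.1.2.1.trans p.2.2.2.2.1, p.2.2.1⟩
    have hΦ : Function.Bijective Φ := by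
      constructor
      · rintro ⟨⟨u, hu⟩, ⟨s, hs⟩⟩ ⟨⟨v, hv⟩, ⟨r, hr⟩⟩ h
        have hsr : s = r := congrArg Subtype.val h
        subst hsr
        have huv : u = v := lastIn_unique hs.2 hr.2
        subst huv
        rfl
      · rintro ⟨s, hts, hs⟩
        have hl := zfun_lastIn Υ hroot s
        exact ⟨⟨⟨zfun Υ s, hl.2.2 t ht hts, hl.1⟩, ⟨s, hs, hl⟩⟩, rfl⟩
    have SSig : Summable (fun p : (Σ u : {u : Node // t <+: u ∧ u ∈ Υ},
        {s : Node // s ∉ Υ ∧ lastIn Υ u.1 s}) => μ p.2.1) :=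
      (SB.comp_injective hΦ.injective).congr (fun p => rfl)
    have Sfib : ∀ u : {u : Node // t <+: u ∧ u ∈ Υ},
        Summable (fun s : {s : Node // s ∉ Υ ∧ lastIn Υ u.1 s} => μ s.1) :=
      fun u => hμ'.subtype {s : Node | s ∉ Υ ∧ lastIn Υ u.1 s}
    have SZ : Summable (fun u : {u : Node // t <+: u ∧ u ∈ Υ} =>
        ∑' s : {s : Node // s ∉ Υ ∧ lastIn Υ u.1 s}, μ s.1) :=
      SSig.sigma' Sfib
    -- B equals the double sum
    have hB : (∑' s : {s : Node // t <+: s ∧ s ∉ Υ}, μ s.1) =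
        ∑' u : {u : Node // t <+: u ∧ u ∈ Υ},
          ∑' s : {s : Node // s ∉ Υ ∧ lastIn Υ u.1 s}, μ s.1 := by
      rw [← (Equiv.ofBijective Φ hΦ).tsum_eq (fun s => μ s.1)]
      exact Summable.tsum_sigma' Sfib SSig
    -- split Vstar
    have hsplit : Vstar μ t = (∑' u : {u : Node // t <+: u ∧ u ∈ Υ}, μ u.1) +
        ∑' s : {s : Node // t <+: s ∧ s ∉ Υ}, μ s.1 := by
      have e1 : (∑' u : {u : Node // t <+: u}, μ u.1) =
          ∑' u : Node, Set.indicator {u : Node | t <+: u} μ u :=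
        tsum_subtype {u : Node | t <+: u} μ
      have e2 : (∑' u : {u : Node // t <+: u ∧ u ∈ Υ}, μ u.1) =
          ∑' u : Node, Set.indicator {u : Node | t <+: u ∧ u ∈ Υ} μ u :=
        tsum_subtype {u : Node | t <+: u ∧ u ∈ Υ} μ
      have e3 : (∑' s : {s : Node // t <+: s ∧ s ∉ Υ}, μ s.1) =
          ∑' s : Node, Set.indicator {s : Node | t <+: s ∧ s ∉ Υ} μ s :=
        tsum_subtype {s : Node | t <+: s ∧ s ∉ Υ} μ
      rw [Vstar, e1, e2, e3, ← Summable.tsum_add (hμ'.indicator _) (hμ'.indicator _)]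
      apply tsum_congr
      intro u
      by_cases h1 : t <+: u <;> by_cases h2 : u ∈ Υ <;>
        simp [Set.indicator_apply, h1, h2]
    have hA : approxOp Υ μ t = (∑' u : {u : Node // t <+: u ∧ u ∈ Υ}, μ u.1) +
        ∑' u : {u : Node // t <+: u ∧ u ∈ Υ},
          ∑' s : {s : Node // s ∉ Υ ∧ lastIn Υ u.1 s}, μ s.1 := by
      rw [approxOp, Set.indicator_of_mem ht, VstarSub]
      simp only [flushProj]
      exact Summable.tsum_add SA SZ
    rw [hsplit, hB, hA]
  refine ⟨key, ?_⟩
  have h2 : ∀ t : Node, t ∉ Υ → approxOp Υ μ t = 0 := fun t ht =>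
    Set.indicator_of_notMem ht _
  have hsum : ∀ s : Set Node, Summable ((fun t : Node =>
      ENNReal.ofReal (w t * (Vstar μ t - approxOp Υ μ t) ^ 2)) ∘ ((↑) : s → Node)) :=
    fun s => ENNReal.summable
  rw [← Summable.tsum_add_tsum_compl (s := Υᶜ) (hsum _) (hsum _)]
  have hz : (∑' t : ↥(Υᶜᶜ), ENNReal.ofReal (w t.1 * (Vstar μ t.1 - approxOp Υ μ t.1) ^ 2)) = 0 := by
    apply Summable.tsum_eq_zero_iff ENNReal.summable |>.mpr
    rintro ⟨t, ht⟩
    have htΥ : t ∈ Υ := by simpa using ht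
    simp [key t htΥ]
  rw [hz, add_zero]
  apply tsum_congr
  rintro ⟨t, ht⟩
  have ht' : t ∉ Υ := ht
  rw [h2 t ht', sub_zero]
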